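/- arXiv:1111.0498 — 8 statements merged into one kernel-verified Lean document; each statement's English description precedes it below -/
import Mathlib

section
/- Let K be a field of characteristic different from 2 and let σ ∈ K[z] be a polynomial. The ring K[z][τ]/(τ² − σ), i.e. AdjoinRoot (X² − C σ) over the polynomial ring K[z], is reduced if and only if σ ≠ 0. -/
open Polynomial

set_option synthInstance.maxHeartbeats 1000000 in
/-- Lemma 4.2(1), affine-chart form: for a field `K` of characteristic `≠ 2` and a polynomial
`σ ∈ K[z]`, the ring `K[z][τ]/(τ² - σ)` is reduced iff `σ ≠ 0`. -/
theorem adjoinRoot_polynomial_isReduced_iff_ne_zero {K : Type*} [Field K] (h2 : (2 : K) ≠ 0)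
    (σ : Polynomial K) :
    IsReduced (AdjoinRoot (X ^ 2 - C σ)) ↔ σ ≠ 0 := by
  set f : Polynomial (Polynomial K) := X ^ 2 - C σ with hf
  have hfm : f.Monic := monic_X_pow_sub_C σ two_ne_zero
  have hfne : f ≠ 0 := hfm.ne_zero
  have key : IsReduced (AdjoinRoot f) ↔ Squarefree f := by
    rw [show IsReduced (AdjoinRoot f) ↔ IsReduced (Polynomial (Polynomial K) ⧸
        (Ideal.span {f} : Ideal (Polynomial (Polynomial K)))) from Iff.rfl,
      ← Ideal.isRadical_iff_quotient_reduced, ← isRadical_iff_span_singleton,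
      isRadical_iff_squarefree_or_zero, or_iff_left hfne]
  rw [key]
  constructor
  · intro hsq hσ
    subst hσ
    have : IsUnit (X : Polynomial (Polynomial K)) := hsq X ⟨1, by simp [hf, sq]⟩
    exact Polynomial.not_isUnit_X this
  · intro hσ p hp
    by_contra hpu
    obtain ⟨q, hq⟩ := hp
    have hpf : p ∣ f := ⟨p * q, by rw [hq]; ring⟩
    -- p divides the derivative of f, which is 2 * X
    have hdf : derivative f = C 2 * X := by
      rw [hf]
      simp [derivative_X_pow]
      rw [← C_1, ← C_add, one_add_one_eq_two]
    have hpd : p ∣ derivative f := by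
      rw [hq, mul_assoc, derivative_mul]
      exact dvd_add ((dvd_mul_right p q).mul_left _) ((dvd_refl p).mul_right _)
    have h2u : IsUnit (C (2 : Polynomial K)) := by
      rw [Polynomial.isUnit_C]
      have h2K : IsUnit (2 : K) := isUnit_iff_ne_zero.mpr h2
      have : (2 : Polynomial K) = C (2 : K) := (map_ofNat (C : K →+* Polynomial K) 2).symm
      rw [this, Polynomial.isUnit_C]
      exact h2K
    have hpX : p ∣ X := (h2u.dvd_mul_left).mp (hdf ▸ hpd)
    obtain ⟨r, hr⟩ := hpX
    rcases (Polynomial.prime_X (R := Polynomial K)).irreducible.isUnit_or_isUnit hr with hu | hu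
    · exact hpu hu
    · have hXp : (X : Polynomial (Polynomial K)) ∣ p :=
        (hu.dvd_mul_right).mp (hr ▸ dvd_rfl)
      have hXf : (X : Polynomial (Polynomial K)) ∣ f := hXp.trans hpf
      rw [Polynomial.X_dvd_iff] at hXf
      apply hσ
      simpa [hf] using hXf
end

section
/- Let K be a field of characteristic different from 2 and let σ ∈ K[z] be a polynomial. The ring K[z][τ]/(τ² − σ), i.e. AdjoinRoot (X² − C σ) over the polynomial ring K[z], viewed as a K-algebra, is smooth over K if and only if σ is a separable polynomial. -/
open Polynomial

private lemma aeval_add_sq_zero {K B : Type*} [CommRing K] [CommRing B] [Algebra K B]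
    (σ : K[X]) (u δ : B) (hδ : δ ^ 2 = 0) :
    aeval (u + δ) σ = aeval u σ + aeval u (derivative σ) * δ := by
  rw [aeval_def, aeval_def, aeval_def, ← eval_map, ← eval_map, ← eval_map, ← derivative_map]
  exact eval_add_of_sq_eq_zero _ _ _ hδ

private lemma aeval_C_X_eq {K : Type*} [CommSemiring K] (σ : K[X]) :
    aeval (C X : (K[X])[X]) σ = C σ := by
  have h : (aeval (C X : (K[X])[X]) : K[X] →ₐ[K] (K[X])[X])
      = (CAlgHom : K[X] →ₐ[K] (K[X])[X]) := by
    apply Polynomial.algHom_ext; simp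
  rw [h]; rfl

set_option maxHeartbeats 2000000 in
/-- Lemma 4.2(3), affine-chart form: for a field `K` of characteristic `≠ 2` and a polynomial
`σ ∈ K[z]`, the `K`-algebra `K[z][τ]/(τ² - σ)` is smooth over `K` iff `σ` is separable. -/
theorem adjoinRoot_smooth_iff_separable {K : Type*} [Field K] (h2 : (2 : K) ≠ 0)
    (σ : Polynomial K) :
    Algebra.Smooth K (AdjoinRoot (X ^ 2 - C σ)) ↔ σ.Separable := by
  have hf0 : (X ^ 2 - C σ : (K[X])[X]) ≠ 0 := by
    refine (monic_X_pow_sub ?_).ne_zero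
    exact lt_of_le_of_lt (degree_C_le) (by norm_num)
  set f : (K[X])[X] := X ^ 2 - C σ with hf
  set J : Ideal (K[X])[X] := Ideal.span {f} with hJ
  let mkA : (K[X])[X] →ₐ[K] AdjoinRoot (X ^ 2 - C σ) := Ideal.Quotient.mkₐ K J
  have hker : RingHom.ker mkA.toRingHom = J := Ideal.mk_ker
  have hk2 : RingHom.ker mkA.toRingHom ^ 2 = Ideal.span {f ^ 2} := by
    rw [hker, hJ, Ideal.span_singleton_pow]
  have hsurj : Function.Surjective mkA := Ideal.Quotient.mkₐ_surjective K J
  haveI : Algebra.FormallySmooth K ((K[X])[X]) :=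
    Algebra.FormallySmooth.comp K (K[X]) ((K[X])[X])
  haveI : Algebra.FinitePresentation K ((K[X])[X]) :=
    Algebra.FinitePresentation.trans K (K[X]) ((K[X])[X])
  let mkB : (K[X])[X] →ₐ[K] ((K[X])[X] ⧸ RingHom.ker mkA.toRingHom ^ 2) :=
    Ideal.Quotient.mkₐ K _
  have hsurjB : Function.Surjective mkB := Ideal.Quotient.mkₐ_surjective K _
  have hmkB0 : ∀ p : (K[X])[X], mkB (f ^ 2 * p) = 0 := fun p =>
    Ideal.Quotient.eq_zero_iff_mem.mpr (hk2 ▸ Ideal.mem_span_singleton.mpr ⟨p, rfl⟩)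
  have hKS : ∀ p : (K[X])[X], mkA.kerSquareLift (mkB p) = mkA p := fun p => rfl
  have hfA : mkA f = 0 :=
    Ideal.Quotient.eq_zero_iff_mem.mpr (Ideal.subset_span rfl)
  have haevC : ∀ τ : K[X], aeval (mkB (C X)) τ = mkB (C τ) := fun τ => by
    rw [aeval_algHom_apply, aeval_C_X_eq]
  constructor
  · rintro ⟨hfs, -⟩
    obtain ⟨g, hg⟩ := (Algebra.FormallySmooth.iff_split_surjection mkA hsurj).mp hfs
    have hgid : ∀ a, mkA.kerSquareLift (g a) = a := AlgHom.congr_fun hg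
    have h1 : (mkA X) ^ 2 = aeval (mkA (C X)) σ := by
      rw [aeval_algHom_apply, aeval_C_X_eq, ← map_pow, ← sub_eq_zero, ← map_sub]
      exact hfA
    have hv2 : (g (mkA X)) ^ 2 = aeval (g (mkA (C X))) σ := by
      rw [← map_pow, h1]
      exact (aeval_algHom_apply g _ σ).symm
    obtain ⟨p, hp⟩ := hsurjB (g (mkA (C X)))
    obtain ⟨q, hq⟩ := hsurjB (g (mkA X))
    have hpC : p - C X ∈ J := by
      have e1 : Ideal.Quotient.mk J p = Ideal.Quotient.mk J (C X) := by
        have : mkA p = mkA (C X) := by rw [← hKS p, hp]; exact hgid _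
        exact this
      exact Ideal.Quotient.eq.mp e1
    have hqC : q - X ∈ J := by
      have e1 : Ideal.Quotient.mk J q = Ideal.Quotient.mk J X := by
        have : mkA q = mkA X := by rw [← hKS q, hq]; exact hgid _
        exact this
      exact Ideal.Quotient.eq.mp e1
    obtain ⟨d, hd⟩ := Ideal.mem_span_singleton.mp (hJ ▸ hpC)
    obtain ⟨e, he⟩ := Ideal.mem_span_singleton.mp (hJ ▸ hqC)
    have hpe : p = C X + f * d := by linear_combination hd
    have hqe : q = X + f * e := by linear_combination he
    have hδ2 : (mkB (f * d)) ^ 2 = 0 := by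
      rw [← map_pow, mul_pow]; exact hmkB0 _
    have hup : mkB p = mkB (C X) + mkB (f * d) := by rw [← map_add, ← hpe]
    have hBeq : mkB (q ^ 2) = mkB (C σ) + mkB (C (derivative σ)) * mkB (f * d) := by
      have h3 : (mkB q) ^ 2 = aeval (mkB p) σ := by rw [hp, hq]; exact hv2
      rw [map_pow, h3, hup, aeval_add_sq_zero (B := (K[X])[X] ⧸ RingHom.ker mkA.toRingHom ^ 2) σ _ _ hδ2, haevC, haevC]
    have hmem : q ^ 2 - C σ - C (derivative σ) * (f * d) ∈ Ideal.span {f ^ 2} := by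
      rw [← hk2]
      refine Ideal.Quotient.eq_zero_iff_mem.mp ?_
      have : mkB (q ^ 2 - C σ - C (derivative σ) * (f * d)) = 0 := by
        rw [map_sub, map_sub, map_mul, hBeq]; ring
      exact this
    obtain ⟨w, hw⟩ := Ideal.mem_span_singleton.mp hmem
    have hkey : f * (1 + 2 * X * e + f * e ^ 2 - C (derivative σ) * d - f * w) = 0 := by
      linear_combination hw - (X + f * e + q) * hqe + hf
    have hfac : 1 + 2 * X * e + f * e ^ 2 - C (derivative σ) * d - f * w = 0 := by
      rcases mul_eq_zero.mp hkey with h | h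
      · exact (hf0 h).elim
      · exact h
    have hev := congrArg (Polynomial.eval (0 : K[X])) hfac
    rw [hf] at hev
    simp only [eval_add, eval_sub, eval_mul, eval_pow, eval_ofNat, eval_X, eval_C, eval_one,
      eval_zero] at hev
    exact ⟨eval 0 e ^ 2 - eval 0 w, eval 0 d, by linear_combination -hev⟩
  · intro hsep
    obtain ⟨a, b, hab⟩ := hsep
    have hε2 : (mkB f) ^ 2 = 0 := by
      rw [← map_pow]
      have : f ^ 2 = f ^ 2 * 1 := by ring
      rw [this]; exact hmkB0 1
    have hδ2 : (mkB (C b) * mkB f) ^ 2 = 0 := by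
      rw [← map_mul, ← map_pow]
      have hh : (C b * f) ^ 2 = f ^ 2 * C b ^ 2 := by ring
      rw [hh]; exact hmkB0 _
    have h2i : (2 : (K[X])[X] ⧸ RingHom.ker mkA.toRingHom ^ 2)
        * algebraMap K _ 2⁻¹ = 1 := by
      rw [show ((2 : (K[X])[X] ⧸ RingHom.ker mkA.toRingHom ^ 2)) = algebraMap K _ 2 from
        (map_ofNat _ 2).symm, ← map_mul, mul_inv_cancel₀ h2, map_one]
    have hcop : mkB (C a) * mkB (C σ) + mkB (C b) * mkB (C (derivative σ)) = 1 := by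
      have h' : mkB (C (a * σ + b * derivative σ)) = 1 := by rw [hab, C_1, map_one]
      rw [← h', C_add, C_mul, C_mul, map_add, map_mul, map_mul]
    have hvsq : (mkB X) ^ 2 = mkB (C σ) + mkB f := by
      rw [← map_pow, ← map_add]
      exact congrArg mkB (by rw [hf]; ring)
    have hv'2 : (mkB X - algebraMap K _ 2⁻¹ * mkB (C a) * mkB X * mkB f) ^ 2
        = aeval (mkB (C X) + mkB (C b) * mkB f) σ := by
      rw [aeval_add_sq_zero (B := (K[X])[X] ⧸ RingHom.ker mkA.toRingHom ^ 2) σ _ _ hδ2, haevC, haevC]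
      set i := (algebraMap K ((K[X])[X] ⧸ RingHom.ker mkA.toRingHom ^ 2)) 2⁻¹
      set V := mkB X
      set E := mkB f
      set S := mkB (C σ)
      set S' := mkB (C (derivative σ))
      set A' := mkB (C a)
      set B' := mkB (C b)
      linear_combination (1 - 2*i*A'*E + i^2*A'^2*E^2) * hvsq
        + (-2*i*A' + i^2*A'^2*(S+E)) * hε2 + (-(A'*S*E)) * h2i + (-E) * hcop
    let ψ : (K[X])[X] →ₐ[K] ((K[X])[X] ⧸ RingHom.ker mkA.toRingHom ^ 2) :=
      aevalTower (aeval (mkB (C X) + mkB (C b) * mkB f))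
        (mkB X - algebraMap K _ 2⁻¹ * mkB (C a) * mkB X * mkB f)
    have hψf : ψ f = 0 := by
      rw [hf]
      show aevalTower _ _ (X ^ 2 - C σ) = 0
      rw [map_sub, map_pow, aevalTower_X, aevalTower_C, sub_eq_zero]
      exact hv'2
    have hψJ : ∀ p ∈ J, ψ p = 0 := by
      intro p hp
      obtain ⟨c, hc⟩ := Ideal.mem_span_singleton.mp (hJ ▸ hp)
      rw [hc, map_mul, hψf]
      ring
    let g : AdjoinRoot (X ^ 2 - C σ) →ₐ[K] ((K[X])[X] ⧸ RingHom.ker mkA.toRingHom ^ 2) :=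
      Ideal.Quotient.liftₐ J ψ hψJ
    have hψCX : ψ (C X) = mkB (C X) + mkB (C b) * mkB f := by
      show aevalTower _ _ (C (X : K[X])) = _
      rw [aevalTower_C, aeval_X]
    have hψX : ψ X = mkB X - algebraMap K _ 2⁻¹ * mkB (C a) * mkB X * mkB f :=
      aevalTower_X _ _
    have hKSf : mkA.kerSquareLift (mkB f) = 0 := by rw [hKS]; exact hfA
    have hcomp : mkA.kerSquareLift.comp ψ = mkA := by
      ext
      · show mkA.kerSquareLift (ψ (C X)) = mkA (C X)
        rw [hψCX, map_add, map_mul, hKSf, mul_zero, add_zero, hKS]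
      · show mkA.kerSquareLift (ψ X) = mkA X
        rw [hψX, map_sub, map_mul, hKSf, mul_zero, sub_zero, hKS]
    have hgsec : mkA.kerSquareLift.comp g = AlgHom.id K (AdjoinRoot (X ^ 2 - C σ)) := by
      refine AlgHom.ext fun x => ?_
      obtain ⟨t, rfl⟩ := hsurj x
      have hgt : g (mkA t) = ψ t := rfl
      show mkA.kerSquareLift (g (mkA t)) = mkA t
      rw [hgt]
      exact AlgHom.congr_fun hcomp t
    exact ⟨Algebra.FormallySmooth.of_split mkA g hgsec,
      Algebra.FinitePresentation.quotient (Submodule.fg_span_singleton f)⟩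
end

section
/- Let R be a commutative ring in which 2 is a unit and let Q be a commutative R-algebra that is free of rank 2 as an R-module. If u, v ∈ Q both have trace zero (Algebra.trace R Q u = 0 and Algebra.trace R Q v = 0), then the product u·v lies in the R-submodule R·1 of Q spanned by the identity, i.e. u·v = (algebraMap R Q) r for some r ∈ R. -/
open Polynomial Module Module.Free LinearMap

/-- Auxiliary: for a traceless element `w`, its square lies in `R·1`. -/
theorem sq_traceless_mem_bot {R Q : Type*} [CommRing R] [CommRing Q] [Algebra R Q]
    [Module.Free R Q] (hrank : Module.finrank R Q = 2)
    (w : Q) (hw : Algebra.trace R Q w = 0) :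
    ∃ r : R, w * w = algebraMap R Q r := by
  have hnt : Nontrivial R := by
    by_contra h
    rw [not_nontrivial_iff_subsingleton] at h
    have : Module.finrank R Q = 1 := by
      have := rank_subsingleton (R := R) (M := Q)
      simp [Module.finrank, this]
    omega
  have hfin : Module.Finite R Q := Module.finite_of_finrank_eq_succ hrank
  set f : Q →ₗ[Q] Q := LinearMap.id with hf -- dummy
  set g : Q →ₗ[R] Q := (Algebra.lmul R Q) w with hg
  set p : R[X] := g.charpoly with hp
  have hmonic : p.Monic := g.charpoly_monic
  have hdeg : p.natDegree = 2 := by rw [hp, g.charpoly_natDegree, hrank]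
  -- coeff 1 of charpoly is minus the trace, which is zero
  have hb : Nonempty (ChooseBasisIndex R Q) := by
    have : Fintype.card (ChooseBasisIndex R Q) = 2 := by
      rw [← Module.finrank_eq_card_chooseBasisIndex, hrank]
    exact Fintype.card_pos_iff.mp (by omega)
  have hcard : Fintype.card (ChooseBasisIndex R Q) - 1 = 1 := by
    have : Fintype.card (ChooseBasisIndex R Q) = 2 := by
      rw [← Module.finrank_eq_card_chooseBasisIndex, hrank]
    omega
  have hc1 : p.coeff 1 = 0 := by
    have htr : Algebra.trace R Q w =
        Matrix.trace (LinearMap.toMatrix (chooseBasis R Q) (chooseBasis R Q) g) := by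
      rw [Algebra.trace_apply, LinearMap.trace_eq_matrix_trace R (chooseBasis R Q)]
    rw [Matrix.trace_eq_neg_charpoly_coeff, hcard] at htr
    rw [hw, eq_comm, neg_eq_zero] at htr
    exact htr
  -- Cayley–Hamilton
  have hch : Polynomial.aeval g p = 0 := g.aeval_self_charpoly
  have hsum : p = X ^ 2 + C (p.coeff 1) * X + C (p.coeff 0) := by
    have h3 : p.natDegree < 3 := by omega
    conv_lhs => rw [p.as_sum_range' 3 h3]
    rw [Finset.sum_range_succ, Finset.sum_range_succ, Finset.sum_range_one]
    have hlead : p.coeff 2 = 1 := by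
      have := hmonic.leadingCoeff
      rwa [Polynomial.leadingCoeff, hdeg] at this
    simp [hlead, Polynomial.C_mul_X_pow_eq_monomial, ← Polynomial.C_mul_X_pow_eq_monomial]
    ring
  rw [hsum] at hch
  simp only [map_add, map_mul, map_pow, Polynomial.aeval_X, Polynomial.aeval_C, hc1, map_zero,
    zero_mul, add_zero] at hch
  have happ := congrArg (fun φ : Q →ₗ[R] Q => φ 1) hch
  simp only [LinearMap.add_apply, LinearMap.zero_apply] at happ
  refine ⟨-(p.coeff 0), ?_⟩
  have hpow : (g ^ 2) 1 = w * w := by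
    simp [hg, pow_two, Module.End.mul_apply]
  have halg : ((algebraMap R (Q →ₗ[R] Q)) (p.coeff 0)) 1 = algebraMap R Q (p.coeff 0) := by
    simp [Module.algebraMap_end_apply, Algebra.algebraMap_eq_smul_one]
  rw [hpow, halg] at happ
  rw [map_neg, eq_neg_iff_add_eq_zero]
  exact happ

/-- The multiplication claim from the Appendix (§8): for a commutative ring `R` in which `2` is
a unit and a commutative `R`-algebra `Q` that is free of rank `2` as an `R`-module, the product
of two traceless elements of `Q` lies in `R·1`. -/
theorem mul_traceless_mem_bot {R Q : Type*} [CommRing R] [CommRing Q] [Algebra R Q]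
    (h2 : IsUnit (2 : R)) [Module.Free R Q] (hrank : Module.finrank R Q = 2)
    (u v : Q) (hu : Algebra.trace R Q u = 0) (hv : Algebra.trace R Q v = 0) :
    ∃ r : R, u * v = algebraMap R Q r := by
  obtain ⟨a, ha⟩ := sq_traceless_mem_bot hrank (u + v) (by simp [hu, hv])
  obtain ⟨b, hb⟩ := sq_traceless_mem_bot hrank u hu
  obtain ⟨c, hc⟩ := sq_traceless_mem_bot hrank v hv
  obtain ⟨t, ht⟩ := h2
  refine ⟨↑t⁻¹ * (a - b - c), ?_⟩
  have key : (2 : R) • (u * v) = algebraMap R Q (a - b - c) := by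
    have : (u + v) * (u + v) - u * u - v * v = (2 : R) • (u * v) := by
      rw [two_smul]; ring
    rw [← this, ha, hb, hc, ← map_sub, ← map_sub]
  have : u * v = (↑t⁻¹ : R) • ((2 : R) • (u * v)) := by
    rw [smul_smul]
    have : (↑t⁻¹ : R) * 2 = 1 := by rw [← ht]; exact t.inv_mul
    rw [this, one_smul]
  rw [this, key, Algebra.smul_def, ← map_mul]
end

section
/- Let A be a commutative ring in which 2 is a unit and let c ∈ A. Then the A-algebra A[τ]/(τ² − c), i.e. AdjoinRoot (X² − C c) over A, is étale over A if and only if c is a unit in A. -/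
open Polynomial

section Aux

variable {A : Type*} [CommRing A]

private lemma adjoinRoot_root_sq (c : A) :
    (AdjoinRoot.root (X ^ 2 - C c)) ^ 2 = algebraMap A (AdjoinRoot (X ^ 2 - C c)) c := by
  have h := AdjoinRoot.eval₂_root (X ^ 2 - C c)
  simp only [eval₂_sub, eval₂_pow, eval₂_X, eval₂_C] at h
  rw [AdjoinRoot.algebraMap_eq]
  exact sub_eq_zero.mp h

private lemma sq_zero_mul {B : Type*} [CommRing B] {I : Ideal B} (hI : I ^ 2 = ⊥)
    {x y : B} (hx : x ∈ I) (hy : y ∈ I) : x * y = 0 := by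
  have : x * y ∈ I ^ 2 := by rw [pow_two]; exact Ideal.mul_mem_mul hx hy
  rwa [hI, Ideal.mem_bot] at this

/-- Descent of units along the free extension `A → A[τ]/(τ²-c)`. -/
private lemma isUnit_of_isUnit_algebraMap (c a : A)
    (h : IsUnit (algebraMap A (AdjoinRoot (X ^ 2 - C c)) a)) : IsUnit a := by
  cases subsingleton_or_nontrivial A
  · exact isUnit_of_subsingleton a
  have hmonic : (X ^ 2 - C c).Monic := monic_X_pow_sub_C c (by norm_num)
  let pb := AdjoinRoot.powerBasis' hmonic
  have hdim : 0 < pb.dim := by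
    show 0 < (X ^ 2 - C c).natDegree
    rw [natDegree_X_pow_sub_C]
    norm_num
  obtain ⟨u, hu⟩ := h
  have h1 : a • (↑u⁻¹ : AdjoinRoot (X ^ 2 - C c)) = 1 := by
    rw [Algebra.smul_def, ← hu]
    exact u.mul_inv
  have hone : (1 : AdjoinRoot (X ^ 2 - C c)) = pb.basis ⟨0, hdim⟩ := by
    rw [pb.coe_basis]
    simp
  have := congrArg (fun x => pb.basis.repr x ⟨0, hdim⟩) h1
  simp only [map_smul, Finsupp.smul_apply, smul_eq_mul] at this
  rw [hone, pb.basis.repr_self, Finsupp.single_apply_left (fun _ _ => id)] at this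
  simp only [Finsupp.single_eq_same] at this
  exact IsUnit.of_mul_eq_one _ this

end Aux

section Forward

variable {A : Type*} [CommRing A]

private abbrev Bq (c : A) : Type _ := AdjoinRoot (X ^ 2 - C c)

private noncomputable abbrev rq (c : A) : Bq c := AdjoinRoot.root (X ^ 2 - C c)

private abbrev Mq (c : A) : Type _ := Bq c ⧸ Ideal.span {2 * rq c}

private abbrev Tq (c : A) : Type _ := TrivSqZeroExt (Bq c) (Mq c)

set_option maxHeartbeats 2000000 in
private lemma xq_sq (c : A) :
    (TrivSqZeroExt.inl (rq c) + TrivSqZeroExt.inr 1 : Tq c) ^ 2 = algebraMap A (Tq c) c := by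
  have hsmul : (2 * rq c) • (1 : Mq c) = 0 := by
    rw [Algebra.smul_def, mul_one, Ideal.Quotient.algebraMap_eq, Ideal.Quotient.eq_zero_iff_mem]
    exact Ideal.subset_span rfl
  have h1 : (TrivSqZeroExt.inl (rq c) : Tq c) * TrivSqZeroExt.inr 1
      = TrivSqZeroExt.inr (rq c • 1) := TrivSqZeroExt.inl_mul_inr _ _
  have h2 : (TrivSqZeroExt.inr 1 : Tq c) * TrivSqZeroExt.inl (rq c)
      = TrivSqZeroExt.inr (MulOpposite.op (rq c) • 1) := TrivSqZeroExt.inr_mul_inl _ _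
  have h3 : (TrivSqZeroExt.inr 1 : Tq c) * TrivSqZeroExt.inr 1 = 0 :=
    TrivSqZeroExt.inr_mul_inr _ _ _
  have h4 : (TrivSqZeroExt.inl (rq c) : Tq c) * TrivSqZeroExt.inl (rq c)
      = TrivSqZeroExt.inl (rq c * rq c) := by rw [TrivSqZeroExt.inl_mul_inl]
  have halg : algebraMap A (Tq c) c = TrivSqZeroExt.inl (algebraMap A (Bq c) c) :=
    TrivSqZeroExt.algebraMap_eq_inl' _ _ _ _
  have hsum : (rq c • (1 : Mq c)) + (MulOpposite.op (rq c) • (1 : Mq c)) = 0 := by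
    rw [op_smul_eq_smul (rq c) (1 : Mq c), ← two_smul (Bq c), smul_smul]
    exact hsmul
  calc (TrivSqZeroExt.inl (rq c) + TrivSqZeroExt.inr 1 : Tq c) ^ 2
      = TrivSqZeroExt.inl (rq c) * TrivSqZeroExt.inl (rq c)
        + (TrivSqZeroExt.inl (rq c) * TrivSqZeroExt.inr 1
          + TrivSqZeroExt.inr 1 * TrivSqZeroExt.inl (rq c)
          + TrivSqZeroExt.inr 1 * TrivSqZeroExt.inr 1) := by ring
    _ = TrivSqZeroExt.inl (rq c * rq c)
        + TrivSqZeroExt.inr (rq c • (1 : Mq c) + MulOpposite.op (rq c) • (1 : Mq c)) := by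
        rw [h1, h2, h3, h4, add_zero, TrivSqZeroExt.inr_add]
    _ = algebraMap A (Tq c) c := by
        rw [hsum, TrivSqZeroExt.inr_zero, add_zero, halg, ← pow_two, adjoinRoot_root_sq]

set_option maxHeartbeats 2000000 in
set_option synthInstance.maxHeartbeats 400000 in
/-- If `A[τ]/(τ²-c)` is formally étale then `2τ` is a unit there. -/
private lemma isUnit_two_mul_root (c : A)
    (hE : Algebra.FormallyEtale A (AdjoinRoot (X ^ 2 - C c))) :
    IsUnit (2 * AdjoinRoot.root (X ^ 2 - C c)) := by
  by_contra hru
  have hspan : Ideal.span {2 * rq c} ≠ ⊤ := fun h =>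
    hru (Ideal.span_singleton_eq_top.mp h)
  have h10 : (1 : Mq c) ≠ 0 := by
    intro h
    exact hspan (Ideal.eq_top_iff_one _ |>.mpr (by rwa [← Ideal.Quotient.eq_zero_iff_mem]))
  have hfx : aeval (TrivSqZeroExt.inl (rq c) + TrivSqZeroExt.inr 1 : Tq c) (X ^ 2 - C c) = 0 := by
    simp only [map_sub, map_pow, aeval_X, aeval_C]
    rw [xq_sq, sub_self]
  have hI2 : (Ideal.span {(TrivSqZeroExt.inr 1 : Tq c)}) ^ 2 = ⊥ := by
    have h0 : (TrivSqZeroExt.inr 1 : Tq c) ^ 2 = 0 := by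
      rw [pow_two, TrivSqZeroExt.inr_mul_inr]
    rw [Ideal.span_singleton_pow, h0]
    exact Ideal.span_singleton_eq_bot.mpr rfl
  have heq : (Ideal.Quotient.mkₐ A (Ideal.span {(TrivSqZeroExt.inr 1 : Tq c)})).comp
        (TrivSqZeroExt.inlAlgHom A (Bq c) (Mq c))
      = (Ideal.Quotient.mkₐ A (Ideal.span {(TrivSqZeroExt.inr 1 : Tq c)})).comp
        (AdjoinRoot.liftAlgHom (X ^ 2 - C c) (Algebra.ofId A (Tq c)) _
          (show eval₂ (Algebra.ofId A (Tq c) : A →+* Tq c) _ (X ^ 2 - C c) = 0 from hfx)) := by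
    apply AdjoinRoot.algHom_ext
    simp only [AlgHom.comp_apply, AdjoinRoot.liftAlgHom_root]
    show Ideal.Quotient.mkₐ A (Ideal.span {(TrivSqZeroExt.inr 1 : Tq c)}) (TrivSqZeroExt.inl (rq c))
      = Ideal.Quotient.mkₐ A (Ideal.span {(TrivSqZeroExt.inr 1 : Tq c)}) (TrivSqZeroExt.inl (rq c) + TrivSqZeroExt.inr 1 : Tq c)
    rw [Ideal.Quotient.mkₐ_eq_mk, Ideal.Quotient.mk_eq_mk_iff_sub_mem]
    have : (TrivSqZeroExt.inl (rq c) : Tq c)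
        - (TrivSqZeroExt.inl (rq c) + TrivSqZeroExt.inr 1) = -(TrivSqZeroExt.inr 1) := by ring
    rw [this]
    exact neg_mem (Ideal.subset_span rfl)
  have hinj := (Algebra.FormallyEtale.comp_bijective (R := A) (A := Bq c) _ hI2).1 heq
  have hval : (TrivSqZeroExt.inl (rq c) : Tq c)
      = TrivSqZeroExt.inl (rq c) + TrivSqZeroExt.inr 1 := by
    have := congrArg (fun ψ : Bq c →ₐ[A] Tq c => ψ (rq c)) hinj
    simpa [AdjoinRoot.liftAlgHom_root] using this
  have : (TrivSqZeroExt.inr 1 : Tq c) = 0 := (left_eq_add.mp hval)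
  exact h10 (by simpa using congrArg TrivSqZeroExt.snd this)

end Forward

/-- The étale criterion from Theorem 8.1 (Appendix): for a commutative ring `A` in which `2` is
a unit and `c ∈ A`, the `A`-algebra `A[τ]/(τ² - c)` is étale over `A` iff `c` is a unit. -/
theorem adjoinRoot_etale_iff_isUnit {A : Type*} [CommRing A] (h2 : IsUnit (2 : A)) (c : A) :
    Algebra.Etale A (AdjoinRoot (X ^ 2 - C c)) ↔ IsUnit c := by
  constructor
  · intro hE
    have h2r := isUnit_two_mul_root c hE.formallyEtale
    have h4c : IsUnit (algebraMap A (AdjoinRoot (X ^ 2 - C c)) (4 * c)) := by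
      have hsq : (2 * AdjoinRoot.root (X ^ 2 - C c)) ^ 2
          = algebraMap A (AdjoinRoot (X ^ 2 - C c)) (4 * c) := by
        rw [map_mul, mul_pow, adjoinRoot_root_sq, map_ofNat]
        norm_num
      exact hsq ▸ (h2r.pow 2)
    exact isUnit_of_mul_isUnit_right (isUnit_of_isUnit_algebraMap c (4 * c) h4c)
  · intro hc
    have hr2 : (AdjoinRoot.root (X ^ 2 - C c)) ^ 2
        = algebraMap A (AdjoinRoot (X ^ 2 - C c)) c := adjoinRoot_root_sq c
    have hfe : Algebra.FormallyEtale A (AdjoinRoot (X ^ 2 - C c)) := by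
      rw [Algebra.FormallyEtale.iff_comp_bijective]
      intro S _ _ I hI
      have h2S : IsUnit (2 : S) := by
        have := h2.map (algebraMap A S)
        rwa [map_ofNat] at this
      have hcS : IsUnit (algebraMap A S c) := hc.map _
      constructor
      · -- injectivity
        intro g₁ g₂ hg
        apply AdjoinRoot.algHom_ext
        set s := g₁ (AdjoinRoot.root (X ^ 2 - C c)) with hs
        set s' := g₂ (AdjoinRoot.root (X ^ 2 - C c)) with hs'
        have hsub : s - s' ∈ I := by
          have := congrArg (fun ψ : AdjoinRoot (X ^ 2 - C c) →ₐ[A] S ⧸ I =>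
            ψ (AdjoinRoot.root (X ^ 2 - C c))) hg
          simp only [AlgHom.comp_apply, Ideal.Quotient.mkₐ_eq_mk] at this
          rwa [Ideal.Quotient.mk_eq_mk_iff_sub_mem] at this
        have hs2 : s ^ 2 = algebraMap A S c := by
          rw [hs, ← map_pow, hr2]; exact g₁.commutes c
        have hs'2 : s' ^ 2 = algebraMap A S c := by
          rw [hs', ← map_pow, hr2]; exact g₂.commutes c
        have hsu : IsUnit s := by
          have : IsUnit (s ^ 2) := hs2 ▸ hcS
          exact (isUnit_pow_iff two_ne_zero).mp this
        have hnil : IsNilpotent (s' - s) := by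
          refine ⟨2, ?_⟩
          rw [pow_two]
          have h' : s' - s ∈ I := by simpa using I.neg_mem hsub
          exact sq_zero_mul hI h' h'
        have hsum : IsUnit (s + s') := by
          have h : s + s' = 2 * s + (s' - s) := by ring
          rw [h]
          exact hnil.isUnit_add_left_of_commute (h2S.mul hsu) (Commute.all _ _)
        have h0 : (s - s') * (s + s') = 0 := by
          have h00 : s ^ 2 - s' ^ 2 = 0 := by rw [hs2, hs'2, sub_self]
          calc (s - s') * (s + s') = s ^ 2 - s' ^ 2 := by ring
            _ = 0 := h00
        obtain ⟨u, hu⟩ := hsum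
        have : s - s' = 0 := by
          have h1 : (s + s') * ↑u⁻¹ = 1 := by rw [← hu]; exact u.mul_inv
          calc s - s' = (s - s') * ((s + s') * ↑u⁻¹) := by rw [h1, mul_one]
            _ = (s - s') * (s + s') * ↑u⁻¹ := by ring
            _ = 0 := by rw [h0, zero_mul]
        exact sub_eq_zero.mp this
      · -- surjectivity
        intro g
        obtain ⟨t, ht⟩ := Ideal.Quotient.mk_surjective (g (AdjoinRoot.root (X ^ 2 - C c)))
        have hgr : (g (AdjoinRoot.root (X ^ 2 - C c))) ^ 2 = algebraMap A (S ⧸ I) c := by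
          rw [← map_pow, hr2]; exact g.commutes c
        have hmem : t ^ 2 - algebraMap A S c ∈ I := by
          rw [← Ideal.Quotient.eq_zero_iff_mem, map_sub, map_pow, ht]
          rw [show (Ideal.Quotient.mk I) (algebraMap A S c) = algebraMap A (S ⧸ I) c from rfl]
          rw [hgr, sub_self]
        set ε := t ^ 2 - algebraMap A S c with hε
        have hεnil : IsNilpotent ε := ⟨2, by rw [pow_two]; exact sq_zero_mul hI hmem hmem⟩
        have htu : IsUnit t := by
          have h' : IsUnit (t ^ 2) := by
            have h'' : t ^ 2 = algebraMap A S c + ε := by rw [hε]; ring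
            rw [h'']
            exact hεnil.isUnit_add_left_of_commute hcS (Commute.all _ _)
          exact (isUnit_pow_iff two_ne_zero).mp h'
        obtain ⟨v, hv⟩ := h2S.mul htu
        set s := t - ε * ↑v⁻¹ with hss
        have hvv : (2 * t) * ↑v⁻¹ = 1 := by rw [← hv]; exact v.mul_inv
        have hs2 : s ^ 2 = algebraMap A S c := by
          have hee : ε * ε = 0 := sq_zero_mul hI hmem hmem
          calc s ^ 2
              = t ^ 2 - ε * ((2 * t) * ↑v⁻¹) + (ε * ε) * (↑v⁻¹ * ↑v⁻¹) := by rw [hss]; ring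
            _ = t ^ 2 - ε := by rw [hvv, hee]; ring
            _ = algebraMap A S c := by rw [hε]; ring
        have haev : aeval s (X ^ 2 - C c) = 0 := by
          simp only [map_sub, map_pow, aeval_X, aeval_C]
          rw [hs2, sub_self]
        refine ⟨AdjoinRoot.liftAlgHom (X ^ 2 - C c) (Algebra.ofId A S) s
          (show eval₂ (Algebra.ofId A S : A →+* S) s (X ^ 2 - C c) = 0 from haev), ?_⟩
        apply AdjoinRoot.algHom_ext
        simp only [AlgHom.comp_apply, Ideal.Quotient.mkₐ_eq_mk, AdjoinRoot.liftAlgHom_root]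
        rw [← ht, Ideal.Quotient.mk_eq_mk_iff_sub_mem]
        have hst : s - t = -(ε * ↑v⁻¹) := by rw [hss]; ring
        rw [hst]
        exact neg_mem (I.mul_mem_right _ hmem)
    exact ⟨hfe, AdjoinRoot.finitePresentation _⟩
end

section
/- Let A be a discrete valuation ring in which 2 is a unit, let σ ∈ A be nonzero, and let R := A[τ]/(τ² − σ) (i.e. AdjoinRoot (X² − C σ) over A). Let M be an R-module that is traceable, i.e. M is free of rank 2 as an A-module and for every r ∈ R the trace of the A-linear endomorphism of M given by scalar multiplication by r equals Algebra.trace A R r. Then M is torsion-free as an R-module: for every r in the set of non-zero-divisors of R and every m ∈ M, r • m = 0 implies m = 0. -/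
open Polynomial

theorem aux_norm_trick {A : Type*} [CommRing A] (σ : A) :
    ∀ a b : A, (algebraMap A (AdjoinRoot (X ^ 2 - C σ)) b * AdjoinRoot.root _
        + algebraMap A _ a) * (algebraMap A _ a - algebraMap A _ b * AdjoinRoot.root _)
      = algebraMap A (AdjoinRoot (X ^ 2 - C σ)) (a ^ 2 - σ * b ^ 2) := by
  intro a b
  have hroot : (AdjoinRoot.root (X ^ 2 - C σ)) ^ 2 = algebraMap A _ σ := by
    have h := AdjoinRoot.mk_self (f := X ^ 2 - C σ)
    have h2 : AdjoinRoot.mk (X ^ 2 - C σ) (X ^ 2) - AdjoinRoot.mk _ (C σ) = 0 := by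
      rw [← map_sub]; exact h
    rw [map_pow, AdjoinRoot.mk_X, AdjoinRoot.mk_C, sub_eq_zero] at h2
    rwa [AdjoinRoot.algebraMap_eq]
  have expand : (algebraMap A (AdjoinRoot (X ^ 2 - C σ)) b * AdjoinRoot.root _
        + algebraMap A _ a) * (algebraMap A _ a - algebraMap A _ b * AdjoinRoot.root _)
      = algebraMap A _ a * algebraMap A _ a
        - algebraMap A _ b * algebraMap A _ b * (AdjoinRoot.root (X ^ 2 - C σ)) ^ 2 := by
    ring
  rw [expand, hroot, ← map_mul, ← map_mul, ← map_mul, ← map_sub]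
  congr 1
  ring

/-- Local form of Theorem 6.7(2): over a discrete valuation ring `A` in which `2` is a unit,
with `σ ∈ A` nonzero and `R := A[τ]/(τ² - σ)`, every traceable `R`-module (free of rank `2`
over `A`, with the trace of multiplication by any `r ∈ R` on `M` equal to `Algebra.trace A R r`)
is torsion-free over `R`. -/
theorem traceable_module_torsionFree {A : Type*} [CommRing A] [IsDomain A]
    [IsDiscreteValuationRing A] (h2 : IsUnit (2 : A)) (σ : A) (hσ : σ ≠ 0)
    (M : Type*) [AddCommGroup M] [Module (AdjoinRoot (X ^ 2 - C σ)) M] [Module A M]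
    [IsScalarTower A (AdjoinRoot (X ^ 2 - C σ)) M] [Module.Free A M]
    (hrank : Module.finrank A M = 2)
    (htr : ∀ r : AdjoinRoot (X ^ 2 - C σ),
      LinearMap.trace A M ((LinearMap.lsmul (AdjoinRoot (X ^ 2 - C σ)) M r).restrictScalars A)
        = Algebra.trace A (AdjoinRoot (X ^ 2 - C σ)) r) :
    ∀ r ∈ nonZeroDivisors (AdjoinRoot (X ^ 2 - C σ)), ∀ m : M, r • m = 0 → m = 0 := by
  have hfm : (X ^ 2 - C σ).Monic := monic_X_pow_sub_C σ two_ne_zero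
  have hfdeg : (X ^ 2 - C σ).degree = 2 := by compute_degree!
  intro r hr m hrm
  obtain ⟨p, rfl⟩ := AdjoinRoot.mk_surjective r
  have hmkq : AdjoinRoot.mk (X ^ 2 - C σ) (p %ₘ (X ^ 2 - C σ)) = AdjoinRoot.mk _ p := by
    rw [Polynomial.modByMonic_eq_sub_mul_div p (X ^ 2 - C σ)]
    simp [AdjoinRoot.mk_eq_zero.2 (dvd_mul_right (X ^ 2 - C σ) (p /ₘ (X ^ 2 - C σ)))]
  have hqdeg : (p %ₘ (X ^ 2 - C σ)).degree < 2 := by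
    rw [← hfdeg]; exact degree_modByMonic_lt p hfm
  set a : A := (p %ₘ (X ^ 2 - C σ)).coeff 0 with ha
  set b : A := (p %ₘ (X ^ 2 - C σ)).coeff 1 with hb
  have hqeq : p %ₘ (X ^ 2 - C σ) = C b * X + C a := by
    apply eq_X_add_C_of_degree_le_one
    exact Order.le_of_lt_succ (by exact_mod_cast hqdeg)
  have hrexp : AdjoinRoot.mk (X ^ 2 - C σ) p
      = algebraMap A _ b * AdjoinRoot.root _ + algebraMap A _ a := by
    rw [← hmkq, hqeq, map_add, map_mul, AdjoinRoot.mk_C, AdjoinRoot.mk_C, AdjoinRoot.mk_X,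
      AdjoinRoot.algebraMap_eq]
  have hnorm : AdjoinRoot.mk (X ^ 2 - C σ) p
        * (algebraMap A _ a - algebraMap A _ b * AdjoinRoot.root _)
      = algebraMap A _ (a ^ 2 - σ * b ^ 2) := by
    rw [hrexp]; exact aux_norm_trick σ a b
  by_cases hd : a ^ 2 - σ * b ^ 2 = 0
  · have hrbar0 : (algebraMap A (AdjoinRoot (X ^ 2 - C σ)) a
        - algebraMap A _ b * AdjoinRoot.root _) = 0 :=
      hr.2 _ (by rw [mul_comm, hnorm, hd, map_zero])
    have hdvd : (X ^ 2 - C σ) ∣ (C a - C b * X) := by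
      rw [← AdjoinRoot.mk_eq_zero]
      rw [map_sub, map_mul, AdjoinRoot.mk_C, AdjoinRoot.mk_C, AdjoinRoot.mk_X]
      rwa [AdjoinRoot.algebraMap_eq] at hrbar0
    have hz : (C a - C b * X : A[X]) = 0 := by
      apply Polynomial.eq_zero_of_dvd_of_degree_lt hdvd
      rw [hfdeg]
      calc (C a - C b * X : A[X]).degree
          ≤ max (C a : A[X]).degree (C b * X : A[X]).degree := degree_sub_le _ _
        _ ≤ 1 := by
            apply max_le
            · exact le_trans degree_C_le (by norm_num)
            · exact le_trans (degree_mul_le _ _) (by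
                simpa using add_le_add degree_C_le (le_refl (X : A[X]).degree))
        _ < 2 := by norm_num
    have ha0 : a = 0 := by
      have := congrArg (fun q => Polynomial.coeff q 0) hz
      simpa using this
    have hb0 : b = 0 := by
      have := congrArg (fun q => Polynomial.coeff q 1) hz
      simpa using this
    have hr0 : AdjoinRoot.mk (X ^ 2 - C σ) p = 0 := by
      rw [← hmkq, hqeq, ha0, hb0]; simp
    have h10 : (1 : AdjoinRoot (X ^ 2 - C σ)) = 0 := hr.2 1 (by rw [one_mul, hr0])
    calc m = (1 : AdjoinRoot (X ^ 2 - C σ)) • m := (one_smul _ m).symm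
      _ = (0 : AdjoinRoot (X ^ 2 - C σ)) • m := by rw [h10]
      _ = 0 := zero_smul _ m
  · have hAm : (algebraMap A (AdjoinRoot (X ^ 2 - C σ)) (a ^ 2 - σ * b ^ 2)) • m = 0 := by
      rw [← hnorm, mul_comm, mul_smul, hrm, smul_zero]
    rw [algebraMap_smul] at hAm
    exact (smul_eq_zero.mp hAm).resolve_left hd
end

section
/- Let A be a discrete valuation ring in which 2 is a unit, and let R := A[τ]/(τ²) be the dual numbers over A (i.e. DualNumber A, or AdjoinRoot X² over A). Let M be an R-module that is traceable, i.e. M is free of rank 2 as an A-module and for every r ∈ R the trace of the A-linear endomorphism of M given by scalar multiplication by r equals Algebra.trace A R r. Then M is torsion-free as an R-module: for every r in the set of non-zero-divisors of R and every m ∈ M, r • m = 0 implies m = 0. -/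
/-- Local form of Theorem 6.7(3): over a discrete valuation ring `A` in which `2` is a unit,
with `R := A[τ]/(τ²)` the dual numbers over `A`, every traceable `R`-module (free of rank `2`
over `A`, with the trace of multiplication by any `r ∈ R` on `M` equal to `Algebra.trace A R r`)
is torsion-free over `R`. -/
theorem traceable_module_dualNumber_torsionFree {A : Type*} [CommRing A] [IsDomain A]
    [IsDiscreteValuationRing A] (h2 : IsUnit (2 : A))
    (M : Type*) [AddCommGroup M] [Module (DualNumber A) M] [Module A M]
    [IsScalarTower A (DualNumber A) M] [Module.Free A M]
    (hrank : Module.finrank A M = 2)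
    (htr : ∀ r : DualNumber A,
      LinearMap.trace A M ((LinearMap.lsmul (DualNumber A) M r).restrictScalars A)
        = Algebra.trace A (DualNumber A) r) :
    ∀ r ∈ nonZeroDivisors (DualNumber A), ∀ m : M, r • m = 0 → m = 0 := by
  intro r hr m hm
  -- a := r.fst is nonzero
  have ha : r.fst ≠ 0 := by
    intro h0
    have hre : r = TrivSqZeroExt.inr r.snd := by
      have := TrivSqZeroExt.inl_fst_add_inr_snd_eq r
      rw [h0] at this
      simpa using this.symm
    have hmul : (DualNumber.eps : DualNumber A) * r = 0 := by
      rw [hre, DualNumber.eps, TrivSqZeroExt.inr_mul_inr]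
    have := hr.2 _ hmul
    have h1 : (1 : A) = 0 := by
      rw [DualNumber.eps] at this
      exact TrivSqZeroExt.inr_injective (this.trans (TrivSqZeroExt.inr_zero A).symm)
    exact one_ne_zero h1
  -- decompose r
  have hdecomp : r • m = r.fst • m + r.snd • ((DualNumber.eps : DualNumber A) • m) := by
    conv_lhs => rw [← TrivSqZeroExt.inl_fst_add_inr_snd_eq r]
    rw [add_smul, DualNumber.inr_eq_smul_eps, smul_assoc]
    congr 1
    rw [← algebraMap_smul (DualNumber A) r.fst m]
    rfl
  rw [hdecomp] at hm
  have heps : (DualNumber.eps : DualNumber A) • ((DualNumber.eps : DualNumber A) • m) = 0 := by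
    rw [← mul_smul, DualNumber.eps_mul_eps, zero_smul]
  have h2 : r.fst • ((DualNumber.eps : DualNumber A) • m) = 0 := by
    have := congrArg (fun x => (DualNumber.eps : DualNumber A) • x) hm
    simp only [smul_add, smul_zero] at this
    rw [smul_comm (DualNumber.eps : DualNumber A) r.snd, heps, smul_zero, add_zero] at this
    rw [smul_comm] at this
    exact this
  have hem : (DualNumber.eps : DualNumber A) • m = 0 :=
    (smul_eq_zero.mp h2).resolve_left ha
  rw [hem, smul_zero, add_zero] at hm
  exact (smul_eq_zero.mp hm).resolve_left ha
end

section
/- Let A be a discrete valuation ring in which 2 is a unit, let σ ∈ A be an element not lying in the square of the maximal ideal of A, and let R := A[τ]/(τ² − σ) (i.e. AdjoinRoot (X² − C σ) over A). Let M be an R-module that is traceable, i.e. M is free of rank 2 as an A-module and for every r ∈ R the trace of the A-linear endomorphism of M given by scalar multiplication by r equals Algebra.trace A R r. Then M is a free R-module of rank 1, i.e. there exists an R-linear isomorphism M ≃ R. -/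
open Polynomial

/-- Local form of Theorem 6.7(1): over a discrete valuation ring `A` in which `2` is a unit,
with `σ ∈ A` not in the square of the maximal ideal and `R := A[τ]/(τ² - σ)`, every traceable
`R`-module (free of rank `2` over `A`, with the trace of multiplication by any `r ∈ R` on `M`
equal to `Algebra.trace A R r`) is a free `R`-module of rank `1`. -/
theorem traceable_module_free_of_not_mem_sq_maximalIdeal {A : Type*} [CommRing A] [IsDomain A]
    [IsDiscreteValuationRing A] (h2 : IsUnit (2 : A)) (σ : A)
    (hσ : σ ∉ (IsLocalRing.maximalIdeal A) ^ 2)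
    (M : Type*) [AddCommGroup M] [Module (AdjoinRoot (X ^ 2 - C σ)) M] [Module A M]
    [IsScalarTower A (AdjoinRoot (X ^ 2 - C σ)) M] [Module.Free A M]
    (hrank : Module.finrank A M = 2)
    (htr : ∀ r : AdjoinRoot (X ^ 2 - C σ),
      LinearMap.trace A M ((LinearMap.lsmul (AdjoinRoot (X ^ 2 - C σ)) M r).restrictScalars A)
        = Algebra.trace A (AdjoinRoot (X ^ 2 - C σ)) r) :
    Nonempty (M ≃ₗ[AdjoinRoot (X ^ 2 - C σ)] AdjoinRoot (X ^ 2 - C σ)) := by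
  classical
  have hmonic : (X ^ 2 - C σ).Monic := monic_X_pow_sub_C σ (by norm_num)
  set pb := AdjoinRoot.powerBasis' hmonic with hpb
  have hdim : pb.dim = 2 := by
    show (X ^ 2 - C σ).natDegree = 2
    simp [natDegree_X_pow_sub_C]
  set bR : Module.Basis (Fin 2) A (AdjoinRoot (X ^ 2 - C σ)) :=
    pb.basis.reindex (finCongr hdim) with hbRdef
  have hbR : ∀ i : Fin 2, bR i = AdjoinRoot.root (X ^ 2 - C σ) ^ (i : ℕ) := by
    intro i
    rw [hbRdef, Module.Basis.reindex_apply, PowerBasis.coe_basis]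
    simp [hpb]
  have hbR0 : bR 0 = 1 := by simpa using hbR 0
  have hbR1 : bR 1 = AdjoinRoot.root (X ^ 2 - C σ) := by simpa using hbR 1
  have hroot2 : AdjoinRoot.root (X ^ 2 - C σ) * AdjoinRoot.root (X ^ 2 - C σ)
      = algebraMap A (AdjoinRoot (X ^ 2 - C σ)) σ := by
    have h := AdjoinRoot.eval₂_root (X ^ 2 - C σ)
    simp only [eval₂_sub, eval₂_pow, eval₂_X, eval₂_C, sub_eq_zero] at h
    rw [← pow_two, h, AdjoinRoot.algebraMap_eq]
  have htrR : Algebra.trace A (AdjoinRoot (X ^ 2 - C σ)) (AdjoinRoot.root (X ^ 2 - C σ)) = 0 := by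
    rw [Algebra.trace_eq_matrix_trace bR, Matrix.trace_fin_two,
      Algebra.leftMulMatrix_eq_repr_mul, Algebra.leftMulMatrix_eq_repr_mul,
      hbR0, hbR1, mul_one, hroot2, ← hbR1, Algebra.algebraMap_eq_smul_one, ← hbR0]
    simp
  -- M side
  haveI : Module.Finite A M := Module.finite_of_finrank_pos (by rw [hrank]; norm_num)
  set bM : Module.Basis (Fin 2) A M := Module.finBasisOfFinrankEq A M hrank with hbMdef
  set T : M →ₗ[A] M :=
    (LinearMap.lsmul (AdjoinRoot (X ^ 2 - C σ)) M (AdjoinRoot.root (X ^ 2 - C σ))).restrictScalars A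
    with hT
  set t : Matrix (Fin 2) (Fin 2) A := LinearMap.toMatrix bM bM T with ht
  have htrt : t 0 0 + t 1 1 = 0 := by
    rw [← Matrix.trace_fin_two, ht, ← LinearMap.trace_eq_matrix_trace A bM, hT, htr, htrR]
  have hTT : T ∘ₗ T = σ • LinearMap.id := by
    ext m
    simp only [hT, LinearMap.comp_apply, LinearMap.restrictScalars_apply, LinearMap.lsmul_apply,
      LinearMap.smul_apply, LinearMap.id_apply]
    rw [smul_smul, hroot2, algebraMap_smul]
  have htt : t * t = σ • (1 : Matrix (Fin 2) (Fin 2) A) := by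
    rw [ht, ← LinearMap.toMatrix_comp bM bM bM, hTT, map_smul, LinearMap.toMatrix_id]
  have habc : t 0 0 * t 0 0 + t 0 1 * t 1 0 = σ := by
    have h := congr_fun (congr_fun htt 0) 0
    rwa [Matrix.mul_apply, Fin.sum_univ_two, Matrix.smul_apply, Matrix.one_apply_eq,
      smul_eq_mul, mul_one] at h
  -- find a cyclic vector
  have key : ∃ u : Fin 2 → A,
      IsUnit (u 0 * (u 0 * t 1 0 + u 1 * t 1 1) - (u 0 * t 0 0 + u 1 * t 0 1) * u 1) := by
    by_cases hc : IsUnit (t 1 0)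
    · exact ⟨![1, 0], by simpa using hc⟩
    by_cases hb : IsUnit (t 0 1)
    · refine ⟨![0, 1], ?_⟩
      simpa using hb.neg
    have hcm : t 1 0 ∈ IsLocalRing.maximalIdeal A := hc
    have hbm : t 0 1 ∈ IsLocalRing.maximalIdeal A := hb
    have ha : IsUnit (t 0 0) := by
      by_contra ha
      have ham : t 0 0 ∈ IsLocalRing.maximalIdeal A := ha
      apply hσ
      rw [← habc, sq]
      exact add_mem (Ideal.mul_mem_mul ham ham) (Ideal.mul_mem_mul hbm hcm)
    refine ⟨![1, 1], ?_⟩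
    simp only [Matrix.cons_val_zero, Matrix.cons_val_one, Matrix.head_cons, one_mul, mul_one]
    by_contra hun
    have hm : t 1 0 + t 1 1 - (t 0 0 + t 0 1) ∈ IsLocalRing.maximalIdeal A := hun
    have h2a : IsUnit (2 * t 0 0) := h2.mul ha
    have heq : (2 : A) * t 0 0 = t 1 0 - t 0 1 - (t 1 0 + t 1 1 - (t 0 0 + t 0 1)) := by
      linear_combination htrt
    have : (2 : A) * t 0 0 ∈ IsLocalRing.maximalIdeal A := by
      rw [heq]
      exact sub_mem (sub_mem hcm hbm) hm
    exact this h2a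
  obtain ⟨u, hu⟩ := key
  set e : M := u 0 • bM 0 + u 1 • bM 1 with he
  set φ : AdjoinRoot (X ^ 2 - C σ) →ₗ[AdjoinRoot (X ^ 2 - C σ)] M :=
    LinearMap.toSpanSingleton (AdjoinRoot (X ^ 2 - C σ)) M e with hφ
  set ψ : AdjoinRoot (X ^ 2 - C σ) →ₗ[A] M := LinearMap.restrictScalars A φ with hψ
  have hψ0 : ψ (bR 0) = e := by
    rw [hbR0]
    simp [hψ, hφ, LinearMap.toSpanSingleton_apply]
  have hψ1 : ψ (bR 1) = T e := by
    rw [hbR1]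
    simp [hψ, hφ, hT, LinearMap.toSpanSingleton_apply]
  have hP0 : ∀ i, LinearMap.toMatrix bR bM ψ i 0 = u i := by
    intro i
    rw [LinearMap.toMatrix_apply, hψ0, he, map_add, map_smul, map_smul]
    fin_cases i <;>
      simp [Module.Basis.repr_self, Finsupp.single_apply]
  have hP1 : ∀ i, LinearMap.toMatrix bR bM ψ i 1 = u 0 * t i 0 + u 1 * t i 1 := by
    intro i
    rw [LinearMap.toMatrix_apply, hψ1, he, map_add, map_smul, map_smul, map_add, map_smul,
      map_smul]
    have h0 : bM.repr (T (bM 0)) i = t i 0 := (LinearMap.toMatrix_apply bM bM T i 0).symm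
    have h1 : bM.repr (T (bM 1)) i = t i 1 := (LinearMap.toMatrix_apply bM bM T i 1).symm
    simp [Finsupp.add_apply, Finsupp.smul_apply, h0, h1, smul_eq_mul]
  have hdet : IsUnit (LinearMap.toMatrix bR bM ψ).det := by
    rw [Matrix.det_fin_two, hP0, hP0, hP1, hP1]
    exact hu
  have hbij : Function.Bijective φ := by
    have hco : ⇑(LinearEquiv.ofIsUnitDet hdet) = ⇑φ := by
      funext x
      rw [LinearEquiv.ofIsUnitDet_apply]
      rfl
    exact hco ▸ (LinearEquiv.ofIsUnitDet hdet).bijective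
  exact ⟨(LinearEquiv.ofBijective φ hbij).symm⟩
end

section
/- Let A be a discrete valuation ring in which 2 is a unit, let F be the fraction field of A, let σ ∈ A be nonzero, and let R := A[τ]/(τ² − σ) (i.e. AdjoinRoot (X² − C σ) over A). Then R ⊗_A F is the total ring of fractions of R; that is, R ⊗_A F, with its canonical R-algebra structure, is the localization of R at its multiplicative set of non-zero-divisors (IsLocalization (nonZeroDivisors R) (R ⊗_A F)). -/
open Polynomial TensorProduct

set_option maxHeartbeats 1000000 in
/-- The identification `K(R) ≅ R ⊗_A K(A)` from the proof of Theorem 6.7(2): for a discrete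
valuation ring `A` in which `2` is a unit, with fraction field `F`, `σ ∈ A` nonzero, and
`R := A[τ]/(τ² - σ)`, the ring `R ⊗[A] F` is the localization of `R` at its multiplicative
set of non-zero-divisors, i.e. the total ring of fractions of `R`. -/
theorem tensorProduct_fractionRing_isLocalization {A : Type*} [CommRing A] [IsDomain A]
    [IsDiscreteValuationRing A] (h2 : IsUnit (2 : A)) (σ : A) (hσ : σ ≠ 0) :
    IsLocalization (nonZeroDivisors (AdjoinRoot (X ^ 2 - C σ)))
      (AdjoinRoot (X ^ 2 - C σ) ⊗[A] FractionRing A) := by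
  set q : A[X] := X ^ 2 - C σ with hq
  set R := AdjoinRoot q with hR
  set F := FractionRing A with hF
  set T := R ⊗[A] F with hT
  letI : Algebra F T := Algebra.TensorProduct.rightAlgebra
  have hmonic : q.Monic := monic_X_pow_sub_C σ two_ne_zero
  let pb := AdjoinRoot.powerBasis' hmonic
  haveI : Module.Finite A R := Module.Finite.of_basis pb.basis
  haveI : Module.Free A R := Module.Free.of_basis pb.basis
  have h1 : IsLocalization (Algebra.algebraMapSubmonoid R (nonZeroDivisors A)) T := by
    rw [← isLocalizedModule_iff_isLocalization]
    rw [isLocalizedModule_iff_isBaseChange (S := nonZeroDivisors A) (A := F)]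
    exact Algebra.IsPushout.out (R := A) (S := F) (R' := R) (S' := T)
  -- `T` is a finite `F`-algebra, hence Artinian
  have hbc : IsBaseChange F (IsScalarTower.toAlgHom A R T).toLinearMap :=
    Algebra.IsPushout.out (R := A) (S := F) (R' := R) (S' := T)
  haveI : Module.Finite F T := Module.Finite.equiv hbc.equiv
  haveI : IsArtinianRing T := isArtinian_of_tower F inferInstance
  refine IsLocalization.of_le (Algebra.algebraMapSubmonoid R (nonZeroDivisors A)) _ ?_ ?_
  · rintro x ⟨a, ha, rfl⟩
    rw [mem_nonZeroDivisors_iff_right]; intro z hz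
    have hz' : a • z = 0 := by
      rw [Algebra.smul_def, mul_comm]; exact hz
    have ha0 : a ≠ 0 := nonZeroDivisors.ne_zero ha
    exact (smul_eq_zero.mp hz').resolve_left ha0
  · intro r hr
    have hmem : algebraMap R T r ∈ nonZeroDivisors T :=
      IsLocalization.map_nonZeroDivisors_le
        (Algebra.algebraMapSubmonoid R (nonZeroDivisors A)) T ⟨r, hr, rfl⟩
    have hinj : Function.Injective (LinearMap.mulLeft T (algebraMap R T r)) := by
      intro a b hab
      exact (mul_cancel_left_mem_nonZeroDivisors hmem).mp hab
    obtain ⟨y, hy⟩ :=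
      IsArtinian.surjective_of_injective_endomorphism
        (LinearMap.mulLeft T (algebraMap R T r)) hinj 1
    exact IsUnit.of_mul_eq_one y hy
end
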